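/- Let S be a convex cost process, D a convex portfolio constraint process, and C the set of claim processes superhedgeable with zero cost. Assume C is closed in probability, and let p ∈ M^1 satisfy −p ∈ rc C and p ∉ rc C. Let c ∈ M^1 with π(c) finite and let y ∈ M^∞ satisfy E ∑_{t=0}^T p_t y_t = 1. Then y attains the supremum in the dual representation, i.e. π(c) = E ∑_{t=0}^T c_t y_t − σ_{C¹}(y), if and only if π(c + c') − π(c) ≥ E ∑_{t=0}^T c'_t y_t for every c' ∈ M^1. -/

import Mathlib

open MeasureTheory Filter

noncomputable section

/-- The portfolio held before time `t`, with the convention `x₋₁ = 0`. -/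
def prevP {Ω : Type*} {T : ℕ} {E : Type*} [Zero E]
    (x : Fin (T + 1) → Ω → E) (t : Fin (T + 1)) : Ω → E :=
  if t.1 = 0 then 0 else x ⟨t.1 - 1, lt_of_le_of_lt (Nat.sub_le _ _) t.isLt⟩

/-- The recession cone of a set in a real vector space. -/
def rcone {V : Type*} [AddCommMonoid V] [SMul ℝ V] (A : Set V) : Set V :=
  {y | ∀ a ∈ A, ∀ α : ℝ, 0 < α → a + α • y ∈ A}

variable {Ω : Type*} {m0 : MeasurableSpace Ω} {T : ℕ} {J : Type*} [Fintype J]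

/-- A convex cost process: `S t · ω` is convex, lsc, vanishes at `0`, never `-∞`, and
`S t` is `B(ℝ^J) ⊗ ℱ t`-measurable. -/
structure CostProcess (ℱ : Filtration (Fin (T + 1)) m0) (J : Type*) [Fintype J] where
  S : Fin (T + 1) → (J → ℝ) → Ω → EReal
  ne_bot : ∀ t x ω, S t x ω ≠ ⊥
  convex : ∀ t ω (x y : J → ℝ) (a b : ℝ), 0 ≤ a → 0 ≤ b → a + b = 1 →
    S t (a • x + b • y) ω ≤ (a : EReal) * S t x ω + (b : EReal) * S t y ω
  lsc : ∀ t ω, LowerSemicontinuous fun x => S t x ω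
  zero : ∀ t ω, S t 0 ω = 0
  meas : ∀ t, Measurable[(inferInstance : MeasurableSpace (J → ℝ)).prod (ℱ t)]
    fun p : (J → ℝ) × Ω => S t p.1 p.2

/-- A convex portfolio constraint process: each `D t ω` is closed, convex, contains `0`,
and `ω ↦ D t ω` is `ℱ t`-measurable. -/
structure ConstraintProcess (ℱ : Filtration (Fin (T + 1)) m0) (J : Type*) [Fintype J] where
  D : Fin (T + 1) → Ω → Set (J → ℝ)
  closed : ∀ t ω, IsClosed (D t ω)
  convex : ∀ t ω, Convex ℝ (D t ω)
  zero_mem : ∀ t ω, (0 : J → ℝ) ∈ D t ω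
  meas : ∀ t (U : Set (J → ℝ)), IsOpen U →
    MeasurableSet[ℱ t] {ω | (D t ω ∩ U).Nonempty}

/-- The set `M` of adapted claim processes. -/
def ClaimM (ℱ : Filtration (Fin (T + 1)) m0) : Set (Fin (T + 1) → Ω → ℝ) :=
  {c | StronglyAdapted ℱ c}

/-- The set `M₋` of almost surely nonpositive claim processes. -/
def Mminus (P : Measure Ω) (ℱ : Filtration (Fin (T + 1)) m0) :
    Set (Fin (T + 1) → Ω → ℝ) :=
  {c | c ∈ ClaimM ℱ ∧ ∀ t, ∀ᵐ ω ∂P, c t ω ≤ 0}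

/-- The set `C` of claim processes superhedgeable with zero cost. -/
def Cset (P : Measure Ω) (ℱ : Filtration (Fin (T + 1)) m0)
    (S : CostProcess ℱ J) (D : ConstraintProcess ℱ J) :
    Set (Fin (T + 1) → Ω → ℝ) :=
  {c | c ∈ ClaimM ℱ ∧ ∃ x : Fin (T + 1) → Ω → (J → ℝ), StronglyAdapted ℱ x ∧
    x (Fin.last T) = 0 ∧
    ∀ᵐ ω ∂P, ∀ t, x t ω ∈ D.D t ω ∧
      S.S t (x t ω - prevP x t ω) ω + (c t ω : EReal) ≤ 0}

/-- The set `M¹` of integrable claim processes. -/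
def M1 (P : Measure Ω) (ℱ : Filtration (Fin (T + 1)) m0) :
    Set (Fin (T + 1) → Ω → ℝ) :=
  {c | c ∈ ClaimM ℱ ∧ ∀ t, Integrable (c t) P}

/-- The set `M^∞` of essentially bounded claim processes. -/
def Minf (P : Measure Ω) (ℱ : Filtration (Fin (T + 1)) m0) :
    Set (Fin (T + 1) → Ω → ℝ) :=
  {c | c ∈ ClaimM ℱ ∧ ∀ t, MemLp (c t) ⊤ P}

/-- The bilinear pairing `E ∑ₜ cₜ yₜ`. -/
def pairing (P : Measure Ω) (c y : Fin (T + 1) → Ω → ℝ) : ℝ :=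
  ∫ ω, ∑ t, c t ω * y t ω ∂P

/-- The support function `σ_{C¹}(y) = sup_{c ∈ C¹} E ∑ₜ cₜ yₜ` of a set of integrable
claim processes. -/
def sigmaSup (P : Measure Ω) (A : Set (Fin (T + 1) → Ω → ℝ))
    (y : Fin (T + 1) → Ω → ℝ) : EReal :=
  sSup ((fun c => ((pairing P c y : ℝ) : EReal)) '' A)

/-- `A` is closed in probability (within the space `M` of adapted claim processes). -/
def ClosedInProb (P : Measure Ω) (ℱ : Filtration (Fin (T + 1)) m0)
    (A : Set (Fin (T + 1) → Ω → ℝ)) : Prop :=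
  ∀ cs : ℕ → Fin (T + 1) → Ω → ℝ, (∀ n, cs n ∈ A) →
    ∀ c ∈ ClaimM ℱ, (∀ t, TendstoInMeasure P (fun n => cs n t) atTop (c t)) → c ∈ A

/-- The superhedging cost `π(c) = inf {α ∈ ℝ | c - α • p ∈ C} ∈ [-∞,+∞]`. -/
def shc {Ω : Type*} {T : ℕ} (C : Set (Fin (T + 1) → Ω → ℝ))
    (p c : Fin (T + 1) → Ω → ℝ) : EReal :=
  sInf ((fun α : ℝ => (α : EReal)) '' {α : ℝ | c - α • p ∈ C})


section Helpers

variable (P : Measure Ω) (ℱ : Filtration (Fin (T + 1)) m0)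

lemma integrable_mul_essBdd {f g : Ω → ℝ} (hf : Integrable f P) (hg : MemLp g ⊤ P) :
    Integrable (fun ω => f ω * g ω) P := by
  have hne : eLpNormEssSup g P ≠ ⊤ := by
    have := hg.2; rwa [eLpNorm_exponent_top, lt_top_iff_ne_top] at this
  have hb : ∀ᵐ ω ∂P, ‖g ω‖ ≤ (eLpNormEssSup g P).toReal := by
    filter_upwards [enorm_ae_le_eLpNormEssSup g P] with ω hω
    calc ‖g ω‖ = ((‖g ω‖₊ : ENNReal)).toReal := by simp
      _ ≤ _ := ENNReal.toReal_mono hne hω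
  simpa [mul_comm] using Integrable.bdd_mul hf hg.1 hb

lemma integrable_pairSum {c y : Fin (T + 1) → Ω → ℝ} (hc : c ∈ M1 P ℱ)
    (hy : y ∈ Minf P ℱ) : Integrable (fun ω => ∑ t, c t ω * y t ω) P :=
  integrable_finset_sum _ fun t _ => integrable_mul_essBdd P (hc.2 t) (hy.2 t)

lemma M1_sub_smul {c p : Fin (T + 1) → Ω → ℝ} (hc : c ∈ M1 P ℱ) (hp : p ∈ M1 P ℱ)
    (α : ℝ) : c - α • p ∈ M1 P ℱ := by
  refine ⟨fun t => (hc.1 t).sub ((hp.1 t).const_smul α), fun t => ?_⟩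
  exact (hc.2 t).sub ((hp.2 t).smul α)

lemma M1_add {c c' : Fin (T + 1) → Ω → ℝ} (hc : c ∈ M1 P ℱ) (hc' : c' ∈ M1 P ℱ) :
    c + c' ∈ M1 P ℱ :=
  ⟨fun t => (hc.1 t).add (hc'.1 t), fun t => (hc.2 t).add (hc'.2 t)⟩

lemma pairing_sub_smul {c p y : Fin (T + 1) → Ω → ℝ} (hc : c ∈ M1 P ℱ)
    (hp : p ∈ M1 P ℱ) (hy : y ∈ Minf P ℱ) (α : ℝ) :
    pairing P (c - α • p) y = pairing P c y - α * pairing P p y := by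
  have h1 := integrable_pairSum P ℱ hc hy
  have h2 := integrable_pairSum P ℱ hp hy
  have hfun : (fun ω => ∑ t, (c - α • p) t ω * y t ω) =
      fun ω => (∑ t, c t ω * y t ω) - α * ∑ t, p t ω * y t ω := by
    funext ω
    simp [Pi.sub_apply, Pi.smul_apply, sub_mul, Finset.sum_sub_distrib, Finset.mul_sum,
      mul_assoc]
  unfold pairing
  rw [hfun, integral_sub h1 (h2.const_mul α), integral_const_mul]

lemma pairing_add {c c' y : Fin (T + 1) → Ω → ℝ} (hc : c ∈ M1 P ℱ)
    (hc' : c' ∈ M1 P ℱ) (hy : y ∈ Minf P ℱ) :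
    pairing P (c + c') y = pairing P c y + pairing P c' y := by
  have h1 := integrable_pairSum P ℱ hc hy
  have h2 := integrable_pairSum P ℱ hc' hy
  have hfun : (fun ω => ∑ t, (c + c') t ω * y t ω) =
      fun ω => (∑ t, c t ω * y t ω) + ∑ t, c' t ω * y t ω := by
    funext ω
    simp [Pi.add_apply, add_mul, Finset.sum_add_distrib]
  unfold pairing
  rw [hfun, integral_add h1 h2]

lemma prevP_zero (t : Fin (T + 1)) : prevP (0 : Fin (T + 1) → Ω → (J → ℝ)) t = 0 := by
  unfold prevP; split <;> rfl

lemma zero_mem_Cset (S : CostProcess ℱ J) (D : ConstraintProcess ℱ J) :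
    (0 : Fin (T + 1) → Ω → ℝ) ∈ Cset P ℱ S D := by
  refine ⟨fun t => stronglyMeasurable_const, 0, fun t => stronglyMeasurable_const, rfl, ?_⟩
  refine Filter.Eventually.of_forall fun ω t => ⟨D.zero_mem t ω, ?_⟩
  rw [prevP_zero]
  simp [S.zero]

lemma zero_mem_M1 [IsFiniteMeasure P] : (0 : Fin (T + 1) → Ω → ℝ) ∈ M1 P ℱ :=
  ⟨fun t => stronglyMeasurable_const, fun t => integrable_const 0⟩

lemma pairing_zero (y : Fin (T + 1) → Ω → ℝ) : pairing P (0 : Fin (T + 1) → Ω → ℝ) y = 0 := by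
  simp [pairing]

lemma shc_nonpos {C : Set (Fin (T + 1) → Ω → ℝ)} {p w : Fin (T + 1) → Ω → ℝ}
    (hw : w ∈ C) : shc C p w ≤ 0 := by
  have h0 : w - (0 : ℝ) • p = w := by rw [zero_smul, sub_zero]
  have : ((0 : ℝ) : EReal) ∈ (fun α : ℝ => (α : EReal)) '' {α : ℝ | w - α • p ∈ C} :=
    ⟨0, by simpa [h0] using hw, rfl⟩
  have h := sInf_le this
  rw [EReal.coe_zero] at h
  exact h

end Helpers

/-- Proposition 9: a deflator `y ∈ M^∞` with `E ∑ₜ pₜ yₜ = 1` attains the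
supremum in the dual representation of `π(c)` iff the superhedging selling price with
initial liabilities `c` dominates `c' ↦ E ∑ₜ c'ₜ yₜ` on `M¹`. -/
theorem shc_dual_attained_iff_subgradient
    (P : Measure Ω) [IsProbabilityMeasure P] (ℱ : Filtration (Fin (T + 1)) m0)
    (hcomp : ∀ (t : Fin (T + 1)) (s : Set Ω), P s = 0 → MeasurableSet[ℱ t] s)
    (S : CostProcess ℱ J) (D : ConstraintProcess ℱ J)
    (hcl : ClosedInProb P ℱ (Cset P ℱ S D))
    (p : Fin (T + 1) → Ω → ℝ) (hp : p ∈ M1 P ℱ)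
    (hpneg : -p ∈ rcone (Cset P ℱ S D)) (hppos : p ∉ rcone (Cset P ℱ S D))
    (c : Fin (T + 1) → Ω → ℝ) (hc : c ∈ M1 P ℱ)
    (hfin : shc (Cset P ℱ S D) p c ≠ ⊥) (hfin' : shc (Cset P ℱ S D) p c ≠ ⊤)
    (y : Fin (T + 1) → Ω → ℝ) (hy : y ∈ Minf P ℱ) (hpy : pairing P p y = 1) :
    shc (Cset P ℱ S D) p c =
      ((pairing P c y : ℝ) : EReal) - sigmaSup P (Cset P ℱ S D ∩ M1 P ℱ) y ↔
    ∀ c' ∈ M1 P ℱ,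
      ((pairing P c' y : ℝ) : EReal) ≤
        shc (Cset P ℱ S D) p (c + c') - shc (Cset P ℱ S D) p c := by
  set C := Cset P ℱ S D with hC
  set σy := sigmaSup P (C ∩ M1 P ℱ) y with hσ
  set pcy := pairing P c y with hpcy
  -- weak duality
  have weakdual : ∀ w ∈ M1 P ℱ, ∀ α : ℝ, w - α • p ∈ C →
      ((pairing P w y - α : ℝ) : EReal) ≤ σy := by
    intro w hw α hmem
    have hmul : pairing P (w - α • p) y = pairing P w y - α * pairing P p y :=
      pairing_sub_smul P ℱ hw hp hy α
    rw [hpy, mul_one] at hmul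
    exact le_sSup ⟨w - α • p, ⟨hmem, M1_sub_smul P ℱ hw hp α⟩, by show ((pairing P (w - α • p) y : ℝ) : EReal) = _; rw [hmul]⟩
  have σ_nonneg : (0 : EReal) ≤ σy := by
    have : ((pairing P (0 : Fin (T + 1) → Ω → ℝ) y : ℝ) : EReal) ≤ σy :=
      le_sSup ⟨0, ⟨zero_mem_Cset P ℱ S D, zero_mem_M1 P ℱ⟩, rfl⟩
    simpa [pairing_zero] using this
  set r := (shc C p c).toReal with hrdef
  have hr : shc C p c = (r : EReal) := (EReal.coe_toReal hfin' hfin).symm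
  have claimA : ∀ α : ℝ, c - α • p ∈ C → ((pcy - α : ℝ) : EReal) ≤ σy :=
    weakdual c hc
  constructor
  · -- attainment implies subgradient inequality
    intro h
    have hσtop : σy ≠ ⊤ := by
      intro htop
      rw [htop] at h
      rw [sub_eq_add_neg] at h
      simp only [EReal.neg_top, EReal.add_bot] at h
      exact hfin h
    have hσbot : σy ≠ ⊥ := fun hbot => by simp [hbot] at σ_nonneg
    set s := σy.toReal with hsdef
    have hs : σy = (s : EReal) := (EReal.coe_toReal hσtop hσbot).symm
    have hrs : r = pcy - s := by
      rw [hr, hs, ← EReal.coe_sub] at h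
      exact_mod_cast h
    intro c' hc'
    have key : ((pairing P c' y + r : ℝ) : EReal) ≤ shc C p (c + c') := by
      apply le_sInf
      rintro b ⟨α, hα, rfl⟩
      have hwd := weakdual (c + c') (M1_add P ℱ hc hc') α hα
      rw [hs, pairing_add P ℱ hc hc' hy] at hwd
      have : pcy + pairing P c' y - α ≤ s := by exact_mod_cast hwd
      have : pairing P c' y + r ≤ α := by rw [hrs]; linarith
      exact EReal.coe_le_coe_iff.mpr this
    have hcoe : ((pairing P c' y : ℝ) : EReal) =
        ((pairing P c' y + r : ℝ) : EReal) - (r : EReal) := by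
      rw [← EReal.coe_sub, add_sub_cancel_right]
    rw [hr, hcoe]
    exact EReal.sub_le_sub key le_rfl
  · -- subgradient inequality implies attainment
    intro h
    have hub : σy ≤ ((pcy - r : ℝ) : EReal) := by
      apply sSup_le
      rintro b ⟨w, ⟨hwC, hwM1⟩, rfl⟩
      have hwc : w - c ∈ M1 P ℱ := by
        have := M1_sub_smul P ℱ hwM1 hc 1
        rwa [one_smul] at this
      have hsub := h (w - c) hwc
      have heq : c + (w - c) = w := by ring
      rw [heq, hr] at hsub
      have hpair : pairing P (w - c) y = pairing P w y - pcy := by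
        have := pairing_sub_smul P ℱ hwM1 hc hy 1
        rwa [one_smul, one_mul] at this
      rw [hpair] at hsub
      have hw0 : shc C p w ≤ 0 := shc_nonpos hwC
      have hchain : shc C p w - (r : EReal) ≤ ((-r : ℝ) : EReal) := by
        calc shc C p w - (r : EReal) ≤ 0 - (r : EReal) := EReal.sub_le_sub hw0 le_rfl
          _ = ((-r : ℝ) : EReal) := by rw [← EReal.coe_zero, ← EReal.coe_sub, zero_sub]
      have : ((pairing P w y - pcy : ℝ) : EReal) ≤ ((-r : ℝ) : EReal) :=
        le_trans hsub hchain
      have : pairing P w y - pcy ≤ -r := by exact_mod_cast this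
      have : pairing P w y ≤ pcy - r := by linarith
      exact EReal.coe_le_coe_iff.mpr this
    have hσtop : σy ≠ ⊤ := fun htop => by
      rw [htop] at hub; exact (EReal.coe_lt_top _).not_ge hub
    have hσbot : σy ≠ ⊥ := fun hbot => by simp [hbot] at σ_nonneg
    set s := σy.toReal with hsdef
    have hs : σy = (s : EReal) := (EReal.coe_toReal hσtop hσbot).symm
    have hub' : s ≤ pcy - r := by rw [hs] at hub; exact_mod_cast hub
    have hlb : ((pcy - s : ℝ) : EReal) ≤ shc C p c := by
      apply le_sInf
      rintro b ⟨α, hα, rfl⟩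
      have := claimA α hα
      rw [hs] at this
      have : pcy - α ≤ s := by exact_mod_cast this
      have : pcy - s ≤ α := by linarith
      exact EReal.coe_le_coe_iff.mpr this
    have hlb' : pcy - s ≤ r := by rw [hr] at hlb; exact_mod_cast hlb
    have hseq : s = pcy - r := le_antisymm hub' (by linarith)
    rw [hr, hs, ← EReal.coe_sub]
    exact_mod_cast (by linarith : r = pcy - s)
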